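/- Sufficient condition for primality: let n ≥ 5 and let a be coprime to F_n = 2^(2^n) + 1. If a^((F_n - 1)/4) ≡ -1 (mod F_n), then F_n is prime. -/

import Mathlib

theorem stmt8 (n : ℕ) (hn : 5 ≤ n) (a : ℕ) (ha : Nat.Coprime a (2 ^ 2 ^ n + 1))
    (h : (a : ZMod (2 ^ 2 ^ n + 1)) ^ ((2 ^ 2 ^ n + 1 - 1) / 4) = -1) :
    Nat.Prime (2 ^ 2 ^ n + 1) := by
  set K := 2 ^ n with hK
  have hK32 : 32 ≤ K := by
    calc 32 = 2 ^ 5 := by norm_num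
    _ ≤ 2 ^ n := Nat.pow_le_pow_right (by norm_num) hn
  set N := 2 ^ K + 1 with hN
  -- simplify exponent
  have hexp : (N - 1) / 4 = 2 ^ (K - 2) := by
    have : N - 1 = 2 ^ K := by simp [hN]
    rw [this]
    have : (2:ℕ) ^ K = 2 ^ (K - 2) * 4 := by
      rw [show (4:ℕ) = 2 ^ 2 by norm_num, ← pow_add]
      congr 1
      omega
    rw [this]
    simp
  rw [hexp] at h
  by_contra hnp
  have hN1 : 1 < N := by
    have : 0 < 2 ^ K := pow_pos (by norm_num) _
    omega
  set p := N.minFac with hp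
  have hpprime : p.Prime := Nat.minFac_prime (by omega)
  have hpdvd : p ∣ N := Nat.minFac_dvd N
  haveI : Fact p.Prime := ⟨hpprime⟩
  -- p odd
  have hNodd : Odd N := by
    have h2 : (2:ℕ) ∣ 2 ^ K := dvd_pow_self 2 (by omega)
    rw [Nat.odd_iff]
    omega
  have hp2 : p ≠ 2 := by
    intro h2
    have : (2:ℕ) ∣ N := h2 ▸ hpdvd
    rw [Nat.odd_iff] at hNodd
    omega
  have hp3 : 3 ≤ p := by
    have := hpprime.two_le
    omega
  -- cast h to ZMod p
  have hcast : ((a : ZMod p)) ^ (2 ^ (K - 2)) = -1 := by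
    have := congrArg (ZMod.castHom hpdvd (ZMod p)) h
    rw [map_pow, map_neg, map_one, map_natCast] at this
    exact this
  haveI : Fact (2 < p) := ⟨by omega⟩
  have hne : (-1 : ZMod p) ≠ 1 := ZMod.neg_one_ne_one
  -- order of a in ZMod p
  have hpow1 : (a : ZMod p) ^ (2 ^ (K - 1)) = 1 := by
    have : K - 1 = (K - 2) + 1 := by omega
    rw [this, pow_succ, pow_mul, hcast]
    ring
  have hpowne : (a : ZMod p) ^ (2 ^ (K - 2)) ≠ 1 := by
    rw [hcast]; exact hne
  have horder : orderOf (a : ZMod p) = 2 ^ (K - 1) := by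
    have h21 : K - 1 = (K - 2) + 1 := by omega
    rw [h21]
    exact orderOf_eq_prime_pow hpowne (by rw [← h21]; exact hpow1)
  have ha0 : (a : ZMod p) ≠ 0 := by
    intro h0
    rw [h0, zero_pow (by positivity)] at hcast
    have h1 : (1 : ZMod p) = 0 := by linear_combination hcast
    exact one_ne_zero h1
  have hdvd : 2 ^ (K - 1) ∣ p - 1 := by
    rw [← horder]
    exact orderOf_dvd_of_pow_eq_one (ZMod.pow_card_sub_one_eq_one ha0)
  have hple : 2 ^ (K - 1) + 1 ≤ p := by
    have := Nat.le_of_dvd (by omega) hdvd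
    omega
  have hsq : p * p ≤ N := by
    have := Nat.minFac_sq_le_self (n := N) (by omega) hnp
    rwa [pow_two] at this
  have hbig : 2 ^ (K - 1) * 2 ^ (K - 1) ≥ 2 ^ K := by
    rw [← pow_add]
    exact Nat.pow_le_pow_right (by norm_num) (by omega)
  nlinarith [hple, hsq, hbig, pow_pos (show 0 < 2 by norm_num) (K-1)]
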